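/- Let 0 < α < 1, let ν be a probability measure on [0,∞) whose moments satisfy ∫_0^∞ τ^n dν(τ) = n! / Γ(αn+1) for every n ∈ ℕ, and let t ≥ 0 be real. Define p_n := (t^n / n!) · E_α^{(n)}(−t) for n ∈ ℕ. Then p_n ≥ 0 for every n and ∑_{n=0}^∞ p_n = 1; that is, (p_n) is a probability distribution on ℕ (the fractional Poisson distribution with parameter t = σ^α). -/

import Mathlib

open MeasureTheory Complex
open scoped ComplexOrder

/-- The Mittag-Leffler function `E_α(z) = ∑ₙ zⁿ / Γ(αn+1)`. -/
noncomputable def mittagLeffler (α : ℝ) (z : ℂ) : ℂ :=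
  ∑' n : ℕ, z ^ n / (Real.Gamma (α * n + 1) : ℂ)

lemma ml_summable {α : ℝ} (hα : 0 < α) {x : ℝ} (hx : 0 ≤ x) :
    Summable (fun n : ℕ => x ^ n / Real.Gamma (α * n + 1)) := by
  set y : ℝ := max 1 ((x + 1) ^ (α⁻¹ : ℝ)) with hydef
  have hy1 : (1:ℝ) ≤ y := le_max_left _ _
  have hy0 : (0:ℝ) < y := lt_of_lt_of_le one_pos hy1
  have hxy : x + 1 ≤ y ^ α := by
    have h1 : ((x + 1) ^ (α⁻¹ : ℝ)) ^ α ≤ y ^ α :=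
      Real.rpow_le_rpow (Real.rpow_nonneg (by linarith) _) (le_max_right _ _) hα.le
    calc x + 1 = ((x + 1) ^ (α⁻¹ : ℝ)) ^ α := by
          rw [← Real.rpow_mul (by linarith), inv_mul_cancel₀ hα.ne', Real.rpow_one]
      _ ≤ y ^ α := h1
  have hyα : (0:ℝ) < y ^ α := Real.rpow_pos_of_pos hy0 _
  set r : ℝ := x / y ^ α with hrdef
  have hr0 : 0 ≤ r := div_nonneg hx hyα.le
  have hr1 : r < 1 := (div_lt_one hyα).2 (by linarith [lt_add_one x])
  have key : ∀ n : ℕ, 1 ≤ α * n → x ^ n / Real.Gamma (α * n + 1) ≤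
      (Real.exp y * y) * r ^ n := by
    intro n hn
    set k : ℕ := ⌊α * n⌋₊ with hkdef
    have hαn0 : (0:ℝ) ≤ α * n := by linarith
    have hk1 : 1 ≤ k := Nat.le_floor (by exact_mod_cast hn)
    have hΓ : (k.factorial : ℝ) ≤ Real.Gamma (α * n + 1) := by
      rw [← Real.Gamma_nat_eq_factorial]
      apply Real.Gamma_strictMonoOn_Ici.monotoneOn
      · simp only [Set.mem_Ici]
        have : (1:ℝ) ≤ (k:ℝ) := by exact_mod_cast hk1
        linarith
      · simp only [Set.mem_Ici]; linarith
      · have := Nat.floor_le hαn0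
        push_cast
        linarith [this]
    have hΓ0 : (0:ℝ) < Real.Gamma (α * n + 1) :=
      Real.Gamma_pos_of_pos (by linarith)
    have hfac0 : (0:ℝ) < (k.factorial : ℝ) := by exact_mod_cast k.factorial_pos
    have hyk : y ^ (α * n) / y ≤ (y:ℝ) ^ (k:ℕ) := by
      have h1 : y ^ (α * n - 1) ≤ y ^ ((k:ℝ)) := by
        apply Real.rpow_le_rpow_of_exponent_le hy1
        have := Nat.lt_floor_add_one (α * n)
        linarith
      rw [Real.rpow_sub hy0, Real.rpow_one] at h1
      rwa [Real.rpow_natCast] at h1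
    have hke : (y:ℝ) ^ (k:ℕ) ≤ Real.exp y * k.factorial := by
      have h2 := Real.pow_div_factorial_le_exp (x := y) hy0.le k
      rw [div_le_iff₀ hfac0] at h2
      linarith
    have hΓlb : y ^ (α * n) / (Real.exp y * y) ≤ Real.Gamma (α * n + 1) := by
      have hey : (0:ℝ) < Real.exp y := Real.exp_pos _
      rw [div_le_iff₀ (by positivity)]
      calc y ^ (α * n) = (y ^ (α * n) / y) * y := by field_simp
        _ ≤ ((y:ℝ) ^ (k:ℕ)) * y := by gcongr
        _ ≤ (Real.exp y * k.factorial) * y := by gcongr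
        _ ≤ Real.Gamma (α * n + 1) * (Real.exp y * y) := by
            have : Real.exp y * (k.factorial:ℝ) * y = (k.factorial:ℝ) * (Real.exp y * y) := by ring
            rw [this]
            gcongr
    have hA : y ^ (α * n) = (y ^ α) ^ n := by
      rw [Real.rpow_mul hy0.le, Real.rpow_natCast]
    have hpos : (0:ℝ) < y ^ (α * n) / (Real.exp y * y) := by
      have := Real.rpow_pos_of_pos hy0 (α * n)
      positivity
    calc x ^ n / Real.Gamma (α * n + 1)
        ≤ x ^ n / (y ^ (α * n) / (Real.exp y * y)) := by gcongr
      _ = (Real.exp y * y) * r ^ n := by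
          rw [div_div_eq_mul_div, hA, hrdef, div_pow]; ring
  have hgeom : Summable (fun n : ℕ => (Real.exp y * y) * r ^ n) :=
    (summable_geometric_of_lt_one hr0 hr1).mul_left _
  set N : ℕ := ⌈α⁻¹⌉₊ with hN
  rw [← summable_nat_add_iff N]
  refine Summable.of_nonneg_of_le (fun n => ?_) (fun n => ?_) ((summable_nat_add_iff N).2 hgeom)
  · exact div_nonneg (pow_nonneg hx _) (Real.Gamma_pos_of_pos (by positivity)).le
  · apply key
    have hceil : (α⁻¹ : ℝ) ≤ N := Nat.le_ceil _
    have h1 : (1:ℝ) ≤ α * N := by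
      calc (1:ℝ) = α * α⁻¹ := (mul_inv_cancel₀ hα.ne').symm
        _ ≤ α * N := by gcongr
    calc (1:ℝ) ≤ α * N := h1
      _ ≤ α * (↑(n + N)) := by gcongr; push_cast; linarith [Nat.cast_nonneg (α := ℝ) n]

/-- Let `0 < α < 1`, let `ν` be a probability measure on `[0,∞)` with moments
`∫ τⁿ dν = n!/Γ(αn+1)`, and let `t ≥ 0`. Define `pₙ := (tⁿ/n!)·E_α⁽ⁿ⁾(−t)`. Then every
`pₙ` is a nonnegative real number and `∑ₙ pₙ = 1`: `(pₙ)` is a probability distribution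
on `ℕ` (the fractional Poisson distribution). -/
theorem fractional_poisson_distribution
    (α : ℝ) (hα₁ : 0 < α) (hα₂ : α < 1)
    (ν : Measure ℝ) [IsProbabilityMeasure ν] (hsupp : ν (Set.Iio 0) = 0)
    (hmom_int : ∀ n : ℕ, Integrable (fun τ : ℝ => τ ^ n) ν)
    (hmom : ∀ n : ℕ, ∫ τ, τ ^ n ∂ν = (Nat.factorial n : ℝ) / Real.Gamma (α * n + 1))
    (t : ℝ) (ht : 0 ≤ t) :
    (∀ n : ℕ, 0 ≤ (t : ℂ) ^ n / (Nat.factorial n : ℂ) *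
        iteratedDeriv n (mittagLeffler α) (-(t : ℂ))) ∧
      HasSum
        (fun n : ℕ => (t : ℂ) ^ n / (Nat.factorial n : ℂ) *
          iteratedDeriv n (mittagLeffler α) (-(t : ℂ)))
        1 := by
  classical
  have hae : ∀ᵐ τ ∂ν, (0:ℝ) ≤ τ := by
    rw [ae_iff]
    convert hsupp using 2
    ext τ; simp [not_le]
  have hΓpos : ∀ n : ℕ, (0:ℝ) < Real.Gamma (α * n + 1) :=
    fun n => Real.Gamma_pos_of_pos (by positivity)
  have hcont : ∀ n : ℕ, Continuous (fun τ : ℝ => τ ^ n * Real.exp (-(t * τ))) := by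
    intro n; fun_prop
  have hgint : ∀ n : ℕ, Integrable (fun τ : ℝ => τ ^ n * Real.exp (-(t * τ))) ν := by
    intro n
    refine (hmom_int n).mono ((hcont n).aestronglyMeasurable) ?_
    filter_upwards [hae] with τ hτ
    rw [Real.norm_eq_abs, Real.norm_eq_abs, abs_mul,
      _root_.abs_of_nonneg (Real.exp_pos _).le]
    exact mul_le_of_le_one_right (abs_nonneg _) (Real.exp_le_one_iff.2 (by nlinarith))
  set g : ℕ → ℝ := fun n => ∫ τ, τ ^ n * Real.exp (-(t * τ)) ∂ν with hgdef
  have hg0 : ∀ n, 0 ≤ g n := by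
    intro n
    apply integral_nonneg_of_ae
    filter_upwards [hae] with τ hτ
    positivity
  have hgle : ∀ n, g n ≤ (n.factorial : ℝ) / Real.Gamma (α * n + 1) := by
    intro n
    rw [← hmom n]
    apply integral_mono_ae (hgint n) (hmom_int n)
    filter_upwards [hae] with τ hτ
    exact mul_le_of_le_one_right (pow_nonneg hτ n) (Real.exp_le_one_iff.2 (by nlinarith))
  have hexp : ∀ u : ℂ, Complex.exp u = ∑' n : ℕ, u ^ n / (n.factorial : ℂ) := by
    intro u
    rw [Complex.exp_eq_exp_ℂ, NormedSpace.exp_eq_tsum_div]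
  set c : ℕ → ℂ := fun n => (g n : ℂ) / (n.factorial : ℂ) with hcdef
  -- summability helper
  have hsum_aux : ∀ (G : ℕ → ℝ), (∀ n, 0 ≤ G n) →
      (∀ n, G n ≤ (n.factorial : ℝ) / Real.Gamma (α * n + 1)) →
      ∀ {x : ℝ}, 0 ≤ x → Summable (fun n : ℕ => G n * (x ^ n / (n.factorial : ℝ))) := by
    intro G hG0 hGle x hx
    refine Summable.of_nonneg_of_le (fun n => ?_) (fun n => ?_) (ml_summable hα₁ hx)
    · have h1 := hG0 n; positivity
    · have h2 : (0:ℝ) < (n.factorial : ℝ) := by exact_mod_cast n.factorial_pos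
      calc G n * (x ^ n / (n.factorial:ℝ))
          ≤ ((n.factorial:ℝ)/Real.Gamma (α*n+1)) * (x^n / (n.factorial:ℝ)) := by
            apply mul_le_mul_of_nonneg_right (hGle n); positivity
        _ = x ^ n / Real.Gamma (α * n + 1) := by field_simp
  -- the key power series identity
  have key : ∀ w : ℂ, mittagLeffler α (-(t:ℂ) + w) = ∑' n : ℕ, c n * w ^ n := by
    intro w
    set z : ℂ := -(t:ℂ) + w with hz
    -- Step 1 : integral representation of mittagLeffler at z
    have h1 : ∫ τ, Complex.exp ((τ:ℂ) * z) ∂ν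
        = ∑' n : ℕ, z ^ n / (Real.Gamma (α * n + 1) : ℂ) := by
      have hptw : ∀ τ : ℝ, Complex.exp ((τ:ℂ) * z)
          = ∑' n : ℕ, ((τ ^ n : ℝ) : ℂ) * (z ^ n / (n.factorial : ℂ)) := by
        intro τ
        rw [hexp]
        apply tsum_congr
        intro n
        push_cast
        rw [mul_pow]
        ring
      have hint : ∀ n : ℕ, Integrable
          (fun τ : ℝ => ((τ ^ n : ℝ) : ℂ) * (z ^ n / (n.factorial : ℂ))) ν :=
        fun n => ((hmom_int n).ofReal).mul_const _
      have hnrm : ∀ n : ℕ, (∫ τ, ‖((τ ^ n : ℝ):ℂ) * (z ^ n / (n.factorial : ℂ))‖ ∂ν)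
          = ((n.factorial:ℝ)/Real.Gamma (α*n+1)) * (‖z‖ ^ n / (n.factorial:ℝ)) := by
        intro n
        have hcong : (fun τ : ℝ => ‖((τ ^ n : ℝ):ℂ) * (z ^ n / (n.factorial : ℂ))‖)
            =ᵐ[ν] fun τ : ℝ => τ ^ n * (‖z‖ ^ n / (n.factorial:ℝ)) := by
          filter_upwards [hae] with τ hτ
          rw [norm_mul, norm_div, norm_pow, Complex.norm_real, Complex.norm_natCast,
            Real.norm_eq_abs, _root_.abs_of_nonneg (pow_nonneg hτ n)]
        rw [integral_congr_ae hcong, integral_mul_const, hmom n]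
      rw [show (fun τ : ℝ => Complex.exp ((τ:ℂ) * z))
            = fun τ : ℝ => ∑' n : ℕ, ((τ ^ n : ℝ) : ℂ) * (z ^ n / (n.factorial : ℂ)) from
          funext hptw]
      rw [← integral_tsum_of_summable_integral_norm hint ?_]
      · apply tsum_congr
        intro n
        have hIR : ∫ a : ℝ, ((a ^ n : ℝ) : ℂ) ∂ν = ((∫ a : ℝ, a ^ n ∂ν : ℝ) : ℂ) :=
          integral_ofReal
        rw [integral_mul_const, hIR, hmom n]
        have hfac : ((n.factorial : ℝ) : ℂ) ≠ 0 := by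
          exact_mod_cast (Nat.cast_ne_zero (R := ℂ)).2 n.factorial_ne_zero
        have hΓ : ((Real.Gamma (α * n + 1) : ℝ) : ℂ) ≠ 0 :=
          Complex.ofReal_ne_zero.2 (hΓpos n).ne'
        push_cast
        field_simp
      · apply Summable.congr (hsum_aux (fun n => (n.factorial:ℝ)/Real.Gamma (α*n+1))
          (fun n => by positivity) (fun n => le_refl _) (norm_nonneg z))
        intro n
        rw [hnrm n]
    -- Step 2 : expansion around -t
    have h2 : ∫ τ, Complex.exp ((τ:ℂ) * z) ∂ν = ∑' n : ℕ, c n * w ^ n := by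
      have hptw : ∀ τ : ℝ, Complex.exp ((τ:ℂ) * z)
          = ∑' n : ℕ, ((τ ^ n * Real.exp (-(t * τ)) : ℝ) : ℂ) * (w ^ n / (n.factorial : ℂ)) := by
        intro τ
        have hsplit : (τ:ℂ) * z = ((-(t * τ) : ℝ) : ℂ) + (τ:ℂ) * w := by
          rw [hz]; push_cast; ring
        rw [hsplit, Complex.exp_add, hexp ((τ:ℂ) * w), ← Complex.ofReal_exp]
        rw [← tsum_mul_left]
        apply tsum_congr
        intro n
        push_cast
        rw [mul_pow]
        ring
      have hint : ∀ n : ℕ, Integrable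
          (fun τ : ℝ => ((τ ^ n * Real.exp (-(t * τ)) : ℝ) : ℂ) * (w ^ n / (n.factorial : ℂ))) ν :=
        fun n => ((hgint n).ofReal).mul_const _
      have hnrm : ∀ n : ℕ, (∫ τ, ‖((τ ^ n * Real.exp (-(t * τ)) : ℝ):ℂ)
            * (w ^ n / (n.factorial : ℂ))‖ ∂ν)
          = g n * (‖w‖ ^ n / (n.factorial:ℝ)) := by
        intro n
        have hcong : (fun τ : ℝ => ‖((τ ^ n * Real.exp (-(t * τ)) : ℝ):ℂ)
              * (w ^ n / (n.factorial : ℂ))‖)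
            =ᵐ[ν] fun τ : ℝ => (τ ^ n * Real.exp (-(t * τ))) * (‖w‖ ^ n / (n.factorial:ℝ)) := by
          filter_upwards [hae] with τ hτ
          have h3 : (0:ℝ) ≤ τ ^ n * Real.exp (-(t * τ)) := by positivity
          rw [norm_mul, norm_div, norm_pow, Complex.norm_real, Complex.norm_natCast,
            Real.norm_eq_abs, _root_.abs_of_nonneg h3]
        rw [integral_congr_ae hcong, integral_mul_const, hgdef]
      rw [show (fun τ : ℝ => Complex.exp ((τ:ℂ) * z))
            = fun τ : ℝ => ∑' n : ℕ,
              ((τ ^ n * Real.exp (-(t * τ)) : ℝ) : ℂ) * (w ^ n / (n.factorial : ℂ)) from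
          funext hptw]
      rw [← integral_tsum_of_summable_integral_norm hint ?_]
      · apply tsum_congr
        intro n
        have hIR : ∫ a : ℝ, ((a ^ n * Real.exp (-(t * a)) : ℝ) : ℂ) ∂ν
            = ((∫ a : ℝ, a ^ n * Real.exp (-(t * a)) ∂ν : ℝ) : ℂ) := integral_ofReal
        rw [integral_mul_const, hIR]
        have hgn : (∫ a : ℝ, a ^ n * Real.exp (-(t * a)) ∂ν) = g n := rfl
        rw [hgn, hcdef]
        ring
      · apply Summable.congr (hsum_aux g hg0 hgle (norm_nonneg w))
        intro n
        rw [hnrm n]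
    rw [mittagLeffler, ← h2, h1]
  -- summability of the coefficient series
  have hsumc : ∀ u : ℂ, Summable (fun n : ℕ => c n * u ^ n) := by
    intro u
    apply Summable.of_norm
    apply Summable.congr (hsum_aux g hg0 hgle (norm_nonneg u))
    intro n
    rw [hcdef, norm_mul, norm_div, norm_pow, Complex.norm_real, Complex.norm_natCast,
      Real.norm_eq_abs, _root_.abs_of_nonneg (hg0 n)]
    ring
  -- the formal power series
  set p : FormalMultilinearSeries ℂ ℂ ℂ := FormalMultilinearSeries.ofScalars ℂ c with hpdef
  have hpnorm : ∀ n : ℕ, ‖p n‖ = ‖c n‖ := by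
    intro n
    rw [hpdef, FormalMultilinearSeries.ofScalars_norm]
  have hpr : p.radius = ⊤ := by
    apply FormalMultilinearSeries.radius_eq_top_of_summable_norm
    intro r
    apply Summable.congr (hsum_aux g hg0 hgle (r.coe_nonneg))
    intro n
    rw [hpnorm n, hcdef, norm_div, Complex.norm_real, Complex.norm_natCast,
      Real.norm_eq_abs, _root_.abs_of_nonneg (hg0 n)]
    ring
  have hps : HasFPowerSeriesOnBall (mittagLeffler α) p (-(t:ℂ)) ⊤ :=
    { r_le := by rw [hpr]
      r_pos := ENNReal.zero_lt_top
      hasSum := by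
        intro y _
        have h4 : (fun n : ℕ => p n fun _ => y) = fun n : ℕ => c n * y ^ n := by
          funext n
          rw [hpdef, FormalMultilinearSeries.ofScalars_apply_eq, smul_eq_mul]
        rw [h4]
        exact ((hsumc y).hasSum_iff).2 (key y).symm }
  -- iterated derivatives
  have hid : ∀ n : ℕ, iteratedDeriv n (mittagLeffler α) (-(t:ℂ)) = (g n : ℂ) := by
    intro n
    have h5 := hps.factorial_smul (1:ℂ) n
    rw [iteratedDeriv_eq_iteratedFDeriv, ← h5, hpdef,
      FormalMultilinearSeries.ofScalars_apply_eq, hcdef]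
    have hfac : ((n.factorial : ℕ) : ℂ) ≠ 0 := by
      exact_mod_cast (Nat.cast_ne_zero (R := ℂ)).2 n.factorial_ne_zero
    rw [one_pow, smul_eq_mul, nsmul_eq_mul]
    field_simp
  -- Mittag-Leffler at 0 equals 1
  have hml0 : mittagLeffler α 0 = 1 := by
    rw [mittagLeffler]
    rw [tsum_eq_single 0]
    · norm_num [Real.Gamma_one]
    · intro n hn
      rw [zero_pow hn, zero_div]
  constructor
  · intro n
    rw [hid n]
    have h6 : (t : ℂ) ^ n / (Nat.factorial n : ℂ) * (g n : ℂ)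
        = ((t ^ n / (Nat.factorial n : ℝ) * g n : ℝ) : ℂ) := by push_cast; ring
    rw [h6, ← Complex.ofReal_zero, Complex.real_le_real]
    have := hg0 n
    positivity
  · have h7 := hps.hasSum (y := (t:ℂ)) (by simp)
    have h8 : (fun n : ℕ => p n fun _ => (t:ℂ))
        = fun n : ℕ => (t : ℂ) ^ n / (Nat.factorial n : ℂ) *
          iteratedDeriv n (mittagLeffler α) (-(t : ℂ)) := by
      funext n
      rw [hpdef, FormalMultilinearSeries.ofScalars_apply_eq, smul_eq_mul, hid n, hcdef]
      ring
    rw [h8] at h7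
    rwa [neg_add_cancel, hml0] at h7
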